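/- Let J be a graded ideal of R = F_2[U,Q]/(Q^2) with U^{-1}J = U^{-1}R. Define i = min{k ≥ 0 : U^k ∈ J} and j = min{k ≥ 0 : Q·U^k ∈ J}. Then both minima exist, j ≤ i, and J = (U^i, Q·U^j). -/
import Mathlib


open MvPolynomial

noncomputable section

/-- The ring `R = F₂[U,Q]/(Q²)`, where `U = X 0` and `Q = X 1`. -/
abbrev RUQ : Type :=
  MvPolynomial (Fin 2) (ZMod 2) ⧸
    Ideal.span {(X 1 : MvPolynomial (Fin 2) (ZMod 2)) ^ 2}

/-- The quotient map. -/
noncomputable def mkR : MvPolynomial (Fin 2) (ZMod 2) →+* RUQ :=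
  Ideal.Quotient.mk _

/-- The class of `U`. -/
noncomputable def U : RUQ := mkR (X 0)

/-- The class of `Q`. -/
noncomputable def Q : RUQ := mkR (X 1)

/-- The grading weights: `deg U = 2`, `deg Q = 1`. -/
def wt : Fin 2 → ℕ := ![2, 1]

/-- `x ∈ R` is homogeneous of degree `n` (with respect to `deg U = 2`, `deg Q = 1`)
if it is represented by a weighted homogeneous polynomial of degree `n`. -/
def IsHomog (x : RUQ) (n : ℕ) : Prop :=
  ∃ p : MvPolynomial (Fin 2) (ZMod 2), p.IsWeightedHomogeneous wt n ∧ mkR p = x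

/-- An ideal is graded if it is generated by its homogeneous elements. -/
def IsGradedIdeal (J : Ideal RUQ) : Prop :=
  J = Ideal.span {x : RUQ | x ∈ J ∧ ∃ n : ℕ, IsHomog x n}

lemma weight_eval (d : Fin 2 →₀ ℕ) : (Finsupp.weight wt) d = d 0 * 2 + d 1 := by
  rw [Finsupp.weight_apply, Finsupp.sum_fintype]
  · simp [Fin.sum_univ_two, wt, mul_comm]
  · intro i; simp

lemma mkR_monomial_eq_zero (d : Fin 2 →₀ ℕ) (c : ZMod 2) (hd : 2 ≤ d 1) :
    mkR (monomial d c) = 0 := by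
  have hle : Finsupp.single 1 2 ≤ d := by
    rw [Finsupp.single_le_iff]; exact hd
  have : (monomial d c : MvPolynomial (Fin 2) (ZMod 2)) =
      (X 1) ^ 2 * monomial (d - Finsupp.single 1 2) c := by
    rw [X_pow_eq_monomial, monomial_mul, one_mul, add_tsub_cancel_of_le hle]
  rw [this]
  refine Ideal.Quotient.eq_zero_iff_mem.2 ?_
  exact Ideal.mul_mem_right _ _ (Ideal.subset_span rfl)

/-- Every homogeneous element of `RUQ` is `0`, a power of `U`, or `Q` times a power of `U`. -/
lemma homog_classify {x : RUQ} {n : ℕ} (h : IsHomog x n) :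
    x = 0 ∨ (∃ m : ℕ, x = U ^ m) ∨ (∃ m : ℕ, x = Q * U ^ m) := by
  obtain ⟨p, hp, rfl⟩ := h
  set t : Fin 2 →₀ ℕ := Finsupp.single 0 (n / 2) + Finsupp.single 1 (n % 2) with ht
  have ht0 : t 0 = n / 2 := by simp [ht]
  have ht1 : t 1 = n % 2 := by simp [ht]
  have key : mkR p = mkR (monomial t (coeff t p)) := by
    conv_lhs => rw [p.as_sum]
    rw [map_sum]
    rw [Finset.sum_eq_single t]
    · intro d hd hdt
      have hw : d 0 * 2 + d 1 = n := by
        rw [← weight_eval]; exact hp (mem_support_iff.1 hd)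
      by_cases h2 : 2 ≤ d 1
      · exact mkR_monomial_eq_zero d _ h2
      · exfalso
        apply hdt
        have h1 : d 1 = n % 2 := by omega
        have h0 : d 0 = n / 2 := by omega
        ext i
        fin_cases i
        · show d 0 = t 0
          rw [h0, ht0]
        · show d 1 = t 1
          rw [h1, ht1]
    · intro hts
      rw [notMem_support_iff.1 hts, monomial_zero, map_zero]
  rw [key]
  have hZ : ∀ c : ZMod 2, c = 0 ∨ c = 1 := by decide
  rcases hZ (coeff t p) with hc | hc
  · left; rw [hc, monomial_zero, map_zero]
  · rw [hc]
    have hk := Nat.mod_two_eq_zero_or_one n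
    rcases hk with he | ho
    · right; left
      refine ⟨n / 2, ?_⟩
      have htm : (monomial t 1 : MvPolynomial (Fin 2) (ZMod 2)) = X 0 ^ (n / 2) := by
        rw [X_pow_eq_monomial]
        congr 1
        rw [ht, he, Finsupp.single_zero, add_zero]
      rw [htm, map_pow]
      rfl
    · right; right
      refine ⟨n / 2, ?_⟩
      have htm : (monomial t 1 : MvPolynomial (Fin 2) (ZMod 2)) = X 0 ^ (n / 2) * X 1 := by
        rw [X_pow_eq_monomial, ← pow_one (X 1 : MvPolynomial (Fin 2) (ZMod 2)),
          X_pow_eq_monomial, monomial_mul, one_mul, ht, ho]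
      rw [htm, map_mul, map_pow, mul_comm]
      rfl



set_option synthInstance.maxHeartbeats 1000000
set_option maxHeartbeats 1000000

/-- for a graded ideal `J` of `F₂[U,Q]/(Q²)` with `U⁻¹J = U⁻¹R`, setting
`i = min{k ≥ 0 : Uᵏ ∈ J}` and `j = min{k ≥ 0 : Q·Uᵏ ∈ J}`, both minima exist,
`j ≤ i`, and `J = (Uⁱ, Q·Uʲ)`. -/
theorem stmt1 (J : Ideal RUQ) (hgraded : IsGradedIdeal J)
    (hloc : Ideal.map (algebraMap RUQ (Localization.Away U)) J = ⊤) :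
    (∃ k : ℕ, U ^ k ∈ J) ∧ (∃ k : ℕ, Q * U ^ k ∈ J) ∧
      sInf {k : ℕ | Q * U ^ k ∈ J} ≤ sInf {k : ℕ | U ^ k ∈ J} ∧
      J = Ideal.span {U ^ sInf {k : ℕ | U ^ k ∈ J},
        Q * U ^ sInf {k : ℕ | Q * U ^ k ∈ J}} := by
  have hU : ∃ k : ℕ, U ^ k ∈ J := by
    have h1 : (1 : Localization.Away U) ∈
        Ideal.map (algebraMap RUQ (Localization.Away U)) J := by
      rw [hloc]; trivial
    obtain ⟨⟨x, s⟩, hx⟩ := (IsLocalization.mem_map_algebraMap_iff (Submonoid.powers U)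
      (Localization.Away U)).1 h1
    rw [one_mul] at hx
    obtain ⟨c, hc⟩ := (IsLocalization.eq_iff_exists (Submonoid.powers U)
      (Localization.Away U)).1 hx
    obtain ⟨m, hm⟩ := c.2
    obtain ⟨n, hn⟩ := s.2
    refine ⟨m + n, ?_⟩
    have : (c : RUQ) * (s : RUQ) ∈ J := by
      rw [hc]; exact J.mul_mem_left _ x.2
    rwa [← hm, ← hn, ← pow_add] at this
  have hQ : ∃ k : ℕ, Q * U ^ k ∈ J := by
    obtain ⟨k, hk⟩ := hU
    exact ⟨k, J.mul_mem_left Q hk⟩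
  set i := sInf {k : ℕ | U ^ k ∈ J} with hi
  set j := sInf {k : ℕ | Q * U ^ k ∈ J} with hj
  have hiJ : U ^ i ∈ J := Nat.sInf_mem hU
  have hjJ : Q * U ^ j ∈ J := Nat.sInf_mem hQ
  have hji : j ≤ i := Nat.sInf_le (J.mul_mem_left Q hiJ)
  refine ⟨hU, hQ, hji, ?_⟩
  apply le_antisymm
  · conv_lhs => rw [hgraded]
    rw [Ideal.span_le]
    rintro x ⟨hxJ, n, hhom⟩
    rcases homog_classify hhom with rfl | ⟨m, rfl⟩ | ⟨m, rfl⟩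
    · exact zero_mem _
    · have him : i ≤ m := Nat.sInf_le hxJ
      have : U ^ m = U ^ (m - i) * U ^ i := by
        rw [← pow_add, Nat.sub_add_cancel him]
      rw [this]
      exact Ideal.mul_mem_left _ _ (Ideal.subset_span (Set.mem_insert _ _))
    · have hjm : j ≤ m := Nat.sInf_le hxJ
      have : Q * U ^ m = U ^ (m - j) * (Q * U ^ j) := by
        conv_lhs => rw [show m = (m - j) + j from (Nat.sub_add_cancel hjm).symm]
        rw [pow_add]; ring
      rw [this]
      exact Ideal.mul_mem_left _ _ (Ideal.subset_span (Set.mem_insert_of_mem _ rfl))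
  · rw [Ideal.span_le]
    rintro x (rfl | rfl)
    · exact hiJ
    · exact hjJ
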